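/- There are exactly 72 ternary 1-perfect codes of length 4 in F_3^4 (i.e., sets of 9 words that are pairwise at distance ≥ 3 such that every word of F_3^4 is within distance 1 of exactly one codeword). -/

import Mathlib

abbrev V := Fin 4 → ZMod 3

theorem hd_sub (a b v : V) : hammingDist (a - v) (b - v) = hammingDist a b := by
  unfold hammingDist
  congr 1
  apply Finset.filter_congr
  intro i _
  simp [sub_left_inj]

theorem hd_le_one (a b : V) (h : hammingDist a b ≤ 1) (i k : Fin 4)
    (hi : a i ≠ b i) (hk : a k ≠ b k) : i = k := by
  by_contra hne
  have hsub : ({i, k} : Finset (Fin 4)) ⊆ Finset.univ.filter fun j => a j ≠ b j := by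
    intro j hj
    simp only [Finset.mem_insert, Finset.mem_singleton] at hj
    rcases hj with rfl | rfl <;> simp [hi, hk]
  have h2 := Finset.card_le_card hsub
  rw [Finset.card_insert_of_notMem (by simp [hne]), Finset.card_singleton] at h2
  exact absurd (h2.trans h) (by norm_num)

theorem hd_le_of_subset (a b : V) (s : Finset (Fin 4))
    (h : ∀ i, a i ≠ b i → i ∈ s) : hammingDist a b ≤ s.card := by
  apply Finset.card_le_card
  intro i hi
  simp only [Finset.mem_filter] at hi
  exact h i hi.2

def fd (x y : V) : ℕ :=
  (if x 0 = y 0 then 0 else 1) + (if x 1 = y 1 then 0 else 1) +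
  (if x 2 = y 2 then 0 else 1) + (if x 3 = y 3 then 0 else 1)

set_option linter.unnecessarySeqFocus false in
theorem fd_eq (x y : V) : hammingDist x y = fd x y := by
  unfold hammingDist fd
  rw [Finset.card_filter, Fin.sum_univ_four]
  congr 1 <;> [skip; simp [ite_not]] <;> congr 1 <;>
    [skip; simp [ite_not]] <;> congr 1 <;> simp [ite_not]

def pat (j : Fin 4) (b c : ZMod 3) : V :=
  match j with
  | 0 => ![0, 1, b, c]
  | 1 => ![1, 0, b, c]
  | 2 => ![1, b, 0, c]
  | 3 => ![1, b, c, 0]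

def Ft (t : Fin 4 → ZMod 3 × ZMod 3) : Finset V :=
  insert 0 ((Finset.univ : Finset (Fin 4)).biUnion fun j =>
    {pat j (t j).1 (t j).2, fun i => 2 * pat j (t j).1 (t j).2 i})

def goodTuples : Finset (Fin 4 → ZMod 3 × ZMod 3) :=
  { ![(1,1),(1,2),(2,1),(1,2)], ![(1,1),(2,1),(1,2),(2,1)],
    ![(1,2),(1,1),(2,2),(1,2)], ![(1,2),(2,2),(1,1),(2,1)],
    ![(2,1),(1,1),(1,2),(2,2)], ![(2,1),(2,2),(2,1),(1,1)],
    ![(2,2),(1,2),(1,1),(2,2)], ![(2,2),(2,1),(2,2),(1,1)] }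

def enc (f : Fin 4 → Bool × Bool) : Fin 4 → ZMod 3 × ZMod 3 :=
  fun j => (if (f j).1 then 1 else 2, if (f j).2 then 1 else 2)

set_option maxHeartbeats 4000000 in
set_option synthInstance.maxSize 400 in
set_option synthInstance.maxHeartbeats 1000000 in
set_option maxRecDepth 40000 in
theorem good_complete' : ∀ f : Fin 4 → Bool × Bool,
    (∀ j k : Fin 4, j ≠ k →
      3 ≤ fd (pat j (enc f j).1 (enc f j).2) (pat k (enc f k).1 (enc f k).2) ∧
      3 ≤ fd (pat j (enc f j).1 (enc f j).2) (fun i => 2 * pat k (enc f k).1 (enc f k).2 i) ∧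
      3 ≤ fd (fun i => 2 * pat j (enc f j).1 (enc f j).2 i)
        (fun i => 2 * pat k (enc f k).1 (enc f k).2 i)) →
    enc f ∈ goodTuples := by decide

set_option maxRecDepth 40000 in
theorem pat_ne : ∀ (j k : Fin 4) (b c b' c' : ZMod 3), j ≠ k → b ≠ 0 → c ≠ 0 → b' ≠ 0 → c' ≠ 0 →
    pat j b c ≠ pat k b' c' ∧ pat j b c ≠ (fun i => 2 * pat k b' c' i) ∧
    (fun i => 2 * pat j b c i) ≠ (fun i => 2 * pat k b' c' i) := by decide

theorem zmod3_if1 : ∀ a : ZMod 3, a ≠ 0 → a ≠ 1 → a = 2 := by decide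

theorem enc_decide : ∀ (b : Bool) (a : ZMod 3), a ≠ 0 → b = decide (a = 1) →
    (if b then (1 : ZMod 3) else 2) = a := by decide

def L8 : Finset (Finset V) := goodTuples.image Ft

set_option synthInstance.maxSize 400 in
theorem pat_normalize : ∀ (d : V) (j : Fin 4), d j = 0 → (∀ i, i ≠ j → d i ≠ 0) →
    ∃ b c : ZMod 3, b ≠ 0 ∧ c ≠ 0 ∧ (d = pat j b c ∨ d = fun i => 2 * pat j b c i) := by decide

theorem zmod3_double : ∀ a b : ZMod 3, a ≠ 0 → b ≠ 0 → a ≠ b → b = 2 * a := by decide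

theorem classify (D : Finset V) (h0 : (0:V) ∈ D) (hcard : D.card = 9)
    (hdist : ∀ c ∈ D, ∀ c' ∈ D, c ≠ c' → 3 ≤ hammingDist c c')
    (hcov : ∀ x : V, ∃! c, c ∈ D ∧ hammingDist x c ≤ 1) : D ∈ L8 := by
  have hmin : ∀ d ∈ D, d ≠ 0 → 3 ≤ hammingDist d 0 := fun d hd hne => hdist d hd 0 h0 hne
  -- step: every nonzero codeword has a zero coordinate
  have hzero : ∀ d ∈ D, d ≠ 0 → ∃ i, d i = 0 := by
    intro d hd hne
    by_contra hall
    push_neg at hall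
    obtain ⟨u, hu0, hu1, hu2, hu3⟩ : ∃ u : V, u 0 = d 0 ∧ u 1 = d 1 ∧ u 2 = 0 ∧ u 3 = 0 :=
      ⟨fun i => if i = 0 then d 0 else if i = 1 then d 1 else 0, rfl, rfl, rfl, rfl⟩
    have hud : hammingDist u 0 = 2 := by
      have hf : Finset.univ.filter (fun i => u i ≠ (0:V) i) = {0, 1} := by
        ext i
        fin_cases i <;>
          simp [hu0, hu1, hu2, hu3, hall 0, hall 1]
      unfold hammingDist
      rw [hf]
      rfl
    obtain ⟨c, ⟨hcD, hcu⟩, -⟩ := hcov u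
    have hcne : c ≠ 0 := by
      rintro rfl
      omega
    have h3c := hmin c hcD hcne
    have hcu' : hammingDist c u ≤ 1 := by rwa [hammingDist_comm]
    have key2 : ∀ i k, c i ≠ u i → c k ≠ u k → i = k := hd_le_one c u hcu'
    have hc0 : c 0 = u 0 := by
      by_contra hne0
      have heq1 : c 1 = u 1 := by
        by_contra hck; exact (by decide : ((1:Fin 4) = 0) → False) (key2 1 0 hck hne0)
      have heq2 : c 2 = u 2 := by
        by_contra hck; exact (by decide : ((2:Fin 4) = 0) → False) (key2 2 0 hck hne0)
      have heq3 : c 3 = u 3 := by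
        by_contra hck; exact (by decide : ((3:Fin 4) = 0) → False) (key2 3 0 hck hne0)
      have hle : hammingDist c 0 ≤ 2 := by
        have hcard2 : ({0, 1} : Finset (Fin 4)).card = 2 := rfl
        rw [← hcard2]
        apply hd_le_of_subset c 0 {0, 1}
        intro i hi
        simp only [Pi.zero_apply] at hi
        fin_cases i
        · simp
        · simp
        · exact absurd (heq2.trans hu2) hi
        · exact absurd (heq3.trans hu3) hi
      omega
    have hc1 : c 1 = u 1 := by
      by_contra hne1
      have heq2 : c 2 = u 2 := by
        by_contra hck; exact (by decide : ((2:Fin 4) = 1) → False) (key2 2 1 hck hne1)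
      have heq3 : c 3 = u 3 := by
        by_contra hck; exact (by decide : ((3:Fin 4) = 1) → False) (key2 3 1 hck hne1)
      have hle : hammingDist c 0 ≤ 2 := by
        have hcard2 : ({0, 1} : Finset (Fin 4)).card = 2 := rfl
        rw [← hcard2]
        apply hd_le_of_subset c 0 {0, 1}
        intro i hi
        simp only [Pi.zero_apply] at hi
        fin_cases i
        · simp
        · simp
        · exact absurd (heq2.trans hu2) hi
        · exact absurd (heq3.trans hu3) hi
      omega
    have h23 : c 2 = 0 ∨ c 3 = 0 := by
      by_contra hcc
      push_neg at hcc
      have h2 : c 2 ≠ u 2 := by rw [hu2]; exact hcc.1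
      have h3 : c 3 ≠ u 3 := by rw [hu3]; exact hcc.2
      exact (by decide : ((2:Fin 4) = 3) → False) (key2 2 3 h2 h3)
    have hcnd : c ≠ d := by
      intro heq
      rcases h23 with h | h
      · rw [heq] at h; exact hall 2 h
      · rw [heq] at h; exact hall 3 h
    have hcd : hammingDist c d ≤ 2 := by
      have hcard2 : ({2, 3} : Finset (Fin 4)).card = 2 := rfl
      rw [← hcard2]
      apply hd_le_of_subset c d {2, 3}
      intro i hi
      fin_cases i
      · exact absurd (hc0.trans hu0) hi
      · exact absurd (hc1.trans hu1) hi
      · simp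
      · simp
    exact absurd (hdist c hcD d hd hcnd) (by omega)
  -- unique zero coordinate
  have huz : ∀ d ∈ D, d ≠ 0 → ∃ j, d j = 0 ∧ ∀ i, i ≠ j → d i ≠ 0 := by
    intro d hd hne
    obtain ⟨j, hj⟩ := hzero d hd hne
    refine ⟨j, hj, ?_⟩
    intro i hij
    by_contra hi0
    have hle : hammingDist d 0 ≤ 2 := by
      have := hd_le_of_subset d 0 ({i, j}ᶜ) ?_
      · rwa [Finset.card_compl, Finset.card_insert_of_notMem (by simp [hij]),
          Finset.card_singleton] at this
      · intro k hk
        simp only [Finset.mem_compl, Finset.mem_insert, Finset.mem_singleton]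
        rintro (rfl | rfl)
        · exact hk hi0
        · exact hk hj
    have := hmin d hd hne
    omega
  -- pairing lemma: same zero coordinate implies s' = 2s
  have hpair : ∀ s ∈ D, ∀ s' ∈ D, s ≠ 0 → s' ≠ 0 → s ≠ s' → ∀ j, s j = 0 → s' j = 0 →
      s' = fun i => 2 * s i := by
    intro s hs s' hs' hsne hs'ne hne j hj hj'
    obtain ⟨j0, hj0, hjU⟩ := huz s hs hsne
    have hjj0 : j = j0 := by
      by_contra h
      exact hjU j h hj
    subst hjj0
    obtain ⟨j1, hj1, hjU'⟩ := huz s' hs' hs'ne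
    have hjj1 : j = j1 := by
      by_contra h
      exact hjU' j h hj'
    subst hjj1
    have h3 := hdist s hs s' hs' hne
    have hsub : (Finset.univ.filter fun i => s i ≠ s' i) ⊆ Finset.univ.erase j := by
      intro i hi
      simp only [Finset.mem_filter, Finset.mem_univ, true_and] at hi
      simp only [Finset.mem_erase, Finset.mem_univ, and_true]
      rintro rfl
      rw [hj, hj'] at hi
      exact hi rfl
    have hfull : (Finset.univ.filter fun i => s i ≠ s' i) = Finset.univ.erase j := by
      apply Finset.eq_of_subset_of_card_le hsub
      have hc : (Finset.univ.erase j : Finset (Fin 4)).card = 3 := by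
        rw [Finset.card_erase_of_mem (Finset.mem_univ j)]
        rfl
      rw [hc]
      exact h3
    have hdiff : ∀ i, i ≠ j → s i ≠ s' i := by
      intro i hij
      have : i ∈ Finset.univ.filter fun i => s i ≠ s' i := by
        rw [hfull]
        simp [hij]
      simpa using this
    funext i
    by_cases hij : i = j
    · subst hij
      rw [hj', hj]
      ring
    · exact zmod3_double (s i) (s' i) (hjU i hij) (hjU' i hij) (hdiff i hij)
  -- the classes
  set S := D.erase 0 with hSdef
  have hScard : S.card = 8 := by
    rw [hSdef, Finset.card_erase_of_mem h0, hcard]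
  have hSmem : ∀ s ∈ S, s ∈ D ∧ s ≠ 0 := by
    intro s hs
    rw [hSdef, Finset.mem_erase] at hs
    exact ⟨hs.2, hs.1⟩
  set Cl : Fin 4 → Finset V := fun j => S.filter fun s => s j = 0 with hCldef
  have hClD : ∀ j, ∀ s ∈ Cl j, s ∈ D ∧ s ≠ 0 ∧ s j = 0 ∧ ∀ i, i ≠ j → s i ≠ 0 := by
    intro j s hs
    rw [hCldef, Finset.mem_filter] at hs
    obtain ⟨hsD, hsne⟩ := hSmem s hs.1
    refine ⟨hsD, hsne, hs.2, ?_⟩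
    obtain ⟨j0, hj0, hjU⟩ := huz s hsD hsne
    have : j = j0 := by
      by_contra h
      exact hjU j h hs.2
    subst this
    exact hjU
  have hCl2 : ∀ j, (Cl j).card ≤ 2 := by
    intro j
    by_contra h
    push_neg at h
    obtain ⟨a, b, c, ha, hb, hc, hab, hac, hbc⟩ := Finset.two_lt_card_iff.1 (by omega : 2 < (Cl j).card)
    obtain ⟨haD, hane, haj, -⟩ := hClD j a ha
    obtain ⟨hbD, hbne, hbj, -⟩ := hClD j b hb
    obtain ⟨hcD, hcne, hcj, -⟩ := hClD j c hc
    have h1 : b = fun i => 2 * a i := hpair a haD b hbD hane hbne hab j haj hbj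
    have h2 : c = fun i => 2 * a i := hpair a haD c hcD hane hcne hac j haj hcj
    exact hbc (h1.trans h2.symm)
  have hcover : S = Finset.univ.biUnion Cl := by
    ext s
    simp only [Finset.mem_biUnion, Finset.mem_univ, true_and, hCldef, Finset.mem_filter]
    constructor
    · intro hs
      obtain ⟨hsD, hsne⟩ := hSmem s hs
      obtain ⟨j, hj⟩ := hzero s hsD hsne
      exact ⟨j, hs, hj⟩
    · rintro ⟨j, hs, -⟩
      exact hs
  have hdisj : ((Finset.univ : Finset (Fin 4)) : Set (Fin 4)).PairwiseDisjoint Cl := by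
    intro j _ k _ hjk
    simp only [Function.onFun, Finset.disjoint_left]
    intro s hsj hsk
    obtain ⟨-, -, hj, hU⟩ := hClD j s hsj
    obtain ⟨-, -, hk, -⟩ := hClD k s hsk
    exact hU k (fun h => hjk h.symm) hk
  have hsum : ∑ j, (Cl j).card = 8 := by
    rw [← Finset.card_biUnion hdisj, ← hcover, hScard]
  have hCl2' : ∀ j, (Cl j).card = 2 := by
    have e0 := hCl2 0
    have e1 := hCl2 1
    have e2 := hCl2 2
    have e3 := hCl2 3
    rw [Fin.sum_univ_four] at hsum
    have q0 : (Cl 0).card = 2 := by omega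
    have q1 : (Cl 1).card = 2 := by omega
    have q2 : (Cl 2).card = 2 := by omega
    have q3 : (Cl 3).card = 2 := by omega
    intro j
    fin_cases j
    · exact q0
    · exact q1
    · exact q2
    · exact q3
  have hclass : ∀ j, ∃ b c : ZMod 3, b ≠ 0 ∧ c ≠ 0 ∧
      Cl j = {pat j b c, fun i => 2 * pat j b c i} := by
    intro j
    obtain ⟨a, b, hab, hCl⟩ := Finset.card_eq_two.1 (hCl2' j)
    have haC : a ∈ Cl j := by rw [hCl]; simp
    have hbC : b ∈ Cl j := by rw [hCl]; simp
    obtain ⟨haD, hane, haj, haU⟩ := hClD j a haC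
    obtain ⟨hbD, hbne, hbj, -⟩ := hClD j b hbC
    have hb2 : b = fun i => 2 * a i := hpair a haD b hbD hane hbne hab j haj hbj
    obtain ⟨p, q, hp, hq, hcase⟩ := pat_normalize a j haj haU
    have hdouble : ∀ x : ZMod 3, 2 * (2 * x) = x := by decide
    rcases hcase with h | h
    · refine ⟨p, q, hp, hq, ?_⟩
      rw [hCl, hb2, h]
    · refine ⟨p, q, hp, hq, ?_⟩
      have hbpat : b = pat j p q := by
        rw [hb2, h]
        funext i
        exact hdouble _
      rw [hCl, h, hbpat]
      exact Finset.pair_comm _ _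
  choose bf cf hbf hcf hCleq using hclass
  have hDFt : D = Ft (fun j => (bf j, cf j)) := by
    have hins : D = insert 0 S := (Finset.insert_erase h0).symm
    rw [hins, hcover, Ft]
    congr 1
    apply Finset.biUnion_congr rfl
    intro j _
    exact hCleq j
  have hPmem : ∀ j, pat j (bf j) (cf j) ∈ D := by
    intro j
    have h1 : pat j (bf j) (cf j) ∈ Cl j := by
      rw [hCleq j]; exact Finset.mem_insert_self _ _
    have h2 : pat j (bf j) (cf j) ∈ S := Finset.filter_subset _ _ h1
    rw [hSdef] at h2
    exact Finset.mem_of_mem_erase h2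
  have hQmem : ∀ j, (fun i => 2 * pat j (bf j) (cf j) i) ∈ D := by
    intro j
    have h1 : (fun i => 2 * pat j (bf j) (cf j) i) ∈ Cl j := by
      rw [hCleq j]
      exact Finset.mem_insert.2 (Or.inr (Finset.mem_singleton_self _))
    have h2 : (fun i => 2 * pat j (bf j) (cf j) i) ∈ S := Finset.filter_subset _ _ h1
    rw [hSdef] at h2
    exact Finset.mem_of_mem_erase h2
  have hyp : ∀ j k : Fin 4, j ≠ k →
      3 ≤ fd (pat j (bf j) (cf j)) (pat k (bf k) (cf k)) ∧
      3 ≤ fd (pat j (bf j) (cf j)) (fun i => 2 * pat k (bf k) (cf k) i) ∧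
      3 ≤ fd (fun i => 2 * pat j (bf j) (cf j) i) (fun i => 2 * pat k (bf k) (cf k) i) := by
    intro j k hjk
    obtain ⟨n1, n2, n3⟩ :=
      pat_ne j k (bf j) (cf j) (bf k) (cf k) hjk (hbf j) (hcf j) (hbf k) (hcf k)
    exact ⟨by rw [← fd_eq]; exact hdist _ (hPmem j) _ (hPmem k) n1,
      by rw [← fd_eq]; exact hdist _ (hPmem j) _ (hQmem k) n2,
      by rw [← fd_eq]; exact hdist _ (hQmem j) _ (hQmem k) n3⟩
  have henc' : enc (fun j => (decide (bf j = 1), decide (cf j = 1))) = fun j => (bf j, cf j) := by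
    funext j
    unfold enc
    rw [Prod.mk.injEq]
    exact ⟨enc_decide _ _ (hbf j) rfl, enc_decide _ _ (hcf j) rfl⟩
  have hGood : (fun j => (bf j, cf j)) ∈ goodTuples := by
    have h := good_complete' (fun j => (decide (bf j = 1), decide (cf j = 1)))
      (by rw [henc']; exact hyp)
    rwa [henc'] at h
  exact Finset.mem_image.2 ⟨fun j => (bf j, cf j), hGood, hDFt.symm⟩

theorem SP (C : Finset V) (hcard : C.card = 9)
    (hdist : ∀ c ∈ C, ∀ c' ∈ C, c ≠ c' → 3 ≤ hammingDist c c') :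
    ∀ x : V, ∃! c, c ∈ C ∧ hammingDist x c ≤ 1 := by
  have ballcard' : ∀ c : V, (Finset.univ.filter fun y => fd y c ≤ 1).card = 9 := by decide
  have ballcard : ∀ c : V, (Finset.univ.filter fun y => hammingDist y c ≤ 1).card = 9 := by
    intro c
    rw [Finset.filter_congr (fun y _ => by rw [fd_eq] :
      ∀ y ∈ Finset.univ, hammingDist y c ≤ 1 ↔ fd y c ≤ 1)]
    exact ballcard' c
  have key : ∀ x : V, ∀ c ∈ C, ∀ c' ∈ C, hammingDist x c ≤ 1 → hammingDist x c' ≤ 1 → c = c' := by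
    intro x c hc c' hc' h1 h2
    by_contra hne
    have h3 := hdist c hc c' hc' hne
    have htri : hammingDist c c' ≤ hammingDist c x + hammingDist x c' := hammingDist_triangle c x c'
    rw [hammingDist_comm c x] at htri
    omega
  intro x
  have hxball : ∃ c ∈ C, hammingDist x c ≤ 1 := by
    have hdisj : (C : Set V).PairwiseDisjoint
        (fun c => Finset.univ.filter fun y => hammingDist y c ≤ 1) := by
      intro c hc c' hc' hne
      simp only [Function.onFun, Finset.disjoint_left]
      intro y hy hy'
      simp only [Finset.mem_filter] at hy hy'
      exact hne (key y c hc c' hc' hy.2 hy'.2)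
    have hcardU : (C.biUnion fun c => Finset.univ.filter fun y => hammingDist y c ≤ 1).card = 81 := by
      rw [Finset.card_biUnion hdisj]
      simp only [ballcard]
      rw [Finset.sum_const, hcard]
      rfl
    have huniv : (C.biUnion fun c => Finset.univ.filter fun y => hammingDist y c ≤ 1)
        = Finset.univ := by
      apply Finset.eq_univ_of_card
      rw [hcardU]
      simp
    have hx : x ∈ C.biUnion fun c => Finset.univ.filter fun y => hammingDist y c ≤ 1 := by
      rw [huniv]; exact Finset.mem_univ x
    obtain ⟨c, hc, hxc⟩ := Finset.mem_biUnion.1 hx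
    exact ⟨c, hc, (Finset.mem_filter.1 hxc).2⟩
  obtain ⟨c, hc, hx⟩ := hxball
  exact ⟨c, ⟨hc, hx⟩, fun c' ⟨hc', hx'⟩ => key x c' hc' c hc hx' hx⟩

def ball0 : Finset V := Finset.univ.filter fun c => hammingDist 0 c ≤ 1

def L72 : Finset (Finset V) := ball0.biUnion fun c0 => L8.image (Finset.image (· + c0))

theorem hd_add (a b v : V) : hammingDist (a + v) (b + v) = hammingDist a b := by
  have h := hd_sub (a + v) (b + v) v
  rw [add_sub_cancel_right, add_sub_cancel_right] at h
  exact h.symm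

set_option maxRecDepth 40000 in
theorem L8_props' : ∀ D ∈ L8, (0:V) ∈ D ∧ D.card = 9 ∧
    (∀ a ∈ D, ∀ b ∈ D, a ≠ b → 3 ≤ fd a b) := by decide

theorem L8_props : ∀ D ∈ L8, (0:V) ∈ D ∧ D.card = 9 ∧
    (∀ a ∈ D, ∀ b ∈ D, a ≠ b → 3 ≤ hammingDist a b) := by
  intro D hD
  obtain ⟨h0, hc, hd⟩ := L8_props' D hD
  exact ⟨h0, hc, fun a ha b hb hne => by rw [fd_eq]; exact hd a ha b hb hne⟩

set_option maxRecDepth 40000 in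
theorem L8_card : L8.card = 8 := by decide

set_option maxRecDepth 40000 in
theorem ball0_card : ball0.card = 9 := by decide

theorem L72_props : ∀ C ∈ L72, C.card = 9 ∧
    (∀ a ∈ C, ∀ b ∈ C, a ≠ b → 3 ≤ hammingDist a b) := by
  intro C hC
  obtain ⟨c0, hc0, hCim⟩ := Finset.mem_biUnion.1 hC
  obtain ⟨D, hD, rfl⟩ := Finset.mem_image.1 hCim
  obtain ⟨h0D, hDcard, hDdist⟩ := L8_props D hD
  constructor
  · rw [Finset.card_image_of_injective _ (add_left_injective c0), hDcard]
  · intro a ha b hb hab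
    obtain ⟨a', ha', rfl⟩ := Finset.mem_image.1 ha
    obtain ⟨b', hb', rfl⟩ := Finset.mem_image.1 hb
    rw [hd_add]
    exact hDdist a' ha' b' hb' (fun h => hab (by rw [h]))

theorem L72_card : L72.card = 72 := by
  rw [L72, Finset.card_biUnion]
  · have himg : ∀ c0 : V, (L8.image (Finset.image (· + c0))).card = 8 := by
      intro c0
      rw [Finset.card_image_of_injective _
        (Finset.image_injective (add_left_injective c0)), L8_card]
    rw [Finset.sum_congr rfl (fun c0 _ => himg c0), Finset.sum_const, ball0_card]
    rfl
  · intro c0 hc0 c0' hc0' hne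
    simp only [Finset.disjoint_left]
    intro C hC hC'
    obtain ⟨D, hD, rfl⟩ := Finset.mem_image.1 hC
    obtain ⟨D', hD', hEq⟩ := Finset.mem_image.1 hC'
    obtain ⟨h0D, hDcard, hDdist⟩ := L8_props D hD
    obtain ⟨h0D', -, -⟩ := L8_props D' hD'
    set C := D.image (· + c0) with hCdef
    have hCcard : C.card = 9 := by
      rw [hCdef, Finset.card_image_of_injective _ (add_left_injective c0), hDcard]
    have hCdist : ∀ a ∈ C, ∀ b ∈ C, a ≠ b → 3 ≤ hammingDist a b := by
      intro a ha b hb hab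
      obtain ⟨a', ha', rfl⟩ := Finset.mem_image.1 ha
      obtain ⟨b', hb', rfl⟩ := Finset.mem_image.1 hb
      rw [hd_add]
      exact hDdist a' ha' b' hb' (fun h => hab (by rw [h]))
    obtain ⟨c, -, huniq⟩ := SP C hCcard hCdist 0
    have hmem1 : c0 ∈ C := by
      rw [hCdef]
      exact Finset.mem_image.2 ⟨0, h0D, zero_add c0⟩
    have hmem2 : c0' ∈ C := by
      rw [← hEq]
      exact Finset.mem_image.2 ⟨0, h0D', zero_add c0'⟩
    have hb1 : hammingDist (0:V) c0 ≤ 1 := (Finset.mem_filter.1 hc0).2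
    have hb2 : hammingDist (0:V) c0' ≤ 1 := (Finset.mem_filter.1 hc0').2
    exact hne ((huniq c0 ⟨hmem1, hb1⟩).trans (huniq c0' ⟨hmem2, hb2⟩).symm)

theorem main_iff (C : Finset V) :
    (C.card = 9 ∧
      (∀ c ∈ C, ∀ c' ∈ C, c ≠ c' → 3 ≤ hammingDist c c') ∧
      ∀ x : V, ∃! c, c ∈ C ∧ hammingDist x c ≤ 1) ↔ C ∈ L72 := by
  constructor
  · rintro ⟨hcard, hdist, hcov⟩
    obtain ⟨c0, ⟨hc0C, hc0d⟩, -⟩ := hcov 0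
    set D := C.image (fun x => x - c0) with hDdef
    have hsubinj : Function.Injective (fun x : V => x - c0) :=
      fun a b h => by simpa [sub_left_inj] using h
    have hDcard : D.card = 9 := by
      rw [hDdef, Finset.card_image_of_injective _ hsubinj, hcard]
    have h0D : (0 : V) ∈ D := Finset.mem_image.2 ⟨c0, hc0C, sub_self c0⟩
    have hDdist : ∀ a ∈ D, ∀ b ∈ D, a ≠ b → 3 ≤ hammingDist a b := by
      intro a ha b hb hab
      obtain ⟨a', ha', rfl⟩ := Finset.mem_image.1 ha
      obtain ⟨b', hb', rfl⟩ := Finset.mem_image.1 hb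
      rw [hd_sub]
      exact hdist a' ha' b' hb' (fun h => hab (by rw [h]))
    have hDcov : ∀ x : V, ∃! d, d ∈ D ∧ hammingDist x d ≤ 1 := by
      intro x
      obtain ⟨c, ⟨hcC, hcd⟩, huniq⟩ := hcov (x + c0)
      refine ⟨c - c0, ⟨Finset.mem_image.2 ⟨c, hcC, rfl⟩, ?_⟩, ?_⟩
      · have := hd_sub (x + c0) c c0
        rw [add_sub_cancel_right] at this
        rw [this]
        exact hcd
      · rintro d ⟨hdD, hdx⟩
        obtain ⟨a, haC, rfl⟩ := Finset.mem_image.1 hdD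
        have hxa : hammingDist (x + c0) a ≤ 1 := by
          have := hd_sub (x + c0) a c0
          rw [add_sub_cancel_right] at this
          rw [← this]
          exact hdx
        rw [huniq a ⟨haC, hxa⟩]
    have hD8 := classify D h0D hDcard hDdist hDcov
    have hC : C = D.image (· + c0) := by
      rw [hDdef, Finset.image_image]
      have : ((· + c0) ∘ fun x => x - c0) = id := by
        funext x
        simp
      rw [this, Finset.image_id]
    refine Finset.mem_biUnion.2 ⟨c0, ?_, Finset.mem_image.2 ⟨D, hD8, hC.symm⟩⟩
    exact Finset.mem_filter.2 ⟨Finset.mem_univ _, hc0d⟩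
  · intro hC
    obtain ⟨hcard, hdist⟩ := L72_props C hC
    exact ⟨hcard, hdist, SP C hcard hdist⟩

theorem stmt_10 :
    Nat.card {C : Finset (Fin 4 → ZMod 3) //
      C.card = 9 ∧
      (∀ c ∈ C, ∀ c' ∈ C, c ≠ c' → 3 ≤ hammingDist c c') ∧
      ∀ x : Fin 4 → ZMod 3, ∃! c, c ∈ C ∧ hammingDist x c ≤ 1} = 72 := by
  rw [Nat.card_congr (Equiv.subtypeEquivRight main_iff)]
  rw [Nat.card_eq_fintype_card, Fintype.card_coe]
  exact L72_card
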